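/- For a finite-dimensional complex vector space V, d ≥ 1, and φ ∈ Sym^d V, the subspace M(φ) = A(φ)^⊥ satisfies the universal property: for every subspace W ⊆ V, φ ∈ Sym^d W if and only if M(φ) ⊆ W. Moreover, M(φ) is the unique subspace of V with this property. -/

import Mathlib

open MvPolynomial

/-- The contraction action `ℓ ∘ φ = Σ_i ℓ_i ∂φ/∂X_i` of a linear form `ℓ ∈ V*` on `Sym V`. -/
noncomputable def contractL (n : ℕ) (ℓ : Fin (n + 1) → ℂ) :
    MvPolynomial (Fin (n + 1)) ℂ →ₗ[ℂ] MvPolynomial (Fin (n + 1)) ℂ :=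
  ∑ i, ℓ i • (pderiv i).toLinearMap

/-- Membership in `Sym^d W` for a subspace `W ⊆ V` of linear forms. -/
def symPowMem (n d : ℕ) (W : Submodule ℂ (MvPolynomial (Fin (n + 1)) ℂ))
    (φ : MvPolynomial (Fin (n + 1)) ℂ) : Prop :=
  φ ∈ Algebra.adjoin ℂ (W : Set (MvPolynomial (Fin (n + 1)) ℂ)) ∧ φ.IsHomogeneous d

/-- `A(φ) = {ℓ ∈ V* : ℓ ∘ φ = 0}`. -/
def Aphi (n : ℕ) (φ : MvPolynomial (Fin (n + 1)) ℂ) : Set (Fin (n + 1) → ℂ) :=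
  {ℓ | contractL n ℓ φ = 0}

/-- `M(φ) = A(φ)^⊥ ⊆ V`: the subspace of linear forms annihilated (under contraction) by
every element of `A(φ)`. -/
noncomputable def Mphi (n : ℕ) (φ : MvPolynomial (Fin (n + 1)) ℂ) :
    Submodule ℂ (MvPolynomial (Fin (n + 1)) ℂ) :=
  homogeneousSubmodule (Fin (n + 1)) ℂ 1 ⊓
    ⨅ ℓ ∈ Aphi n φ, LinearMap.ker (contractL n ℓ)

/-! ### Auxiliary lemmas -/

section Aux

variable {n : ℕ}

lemma contractL_apply (ℓ : Fin (n + 1) → ℂ) (p : MvPolynomial (Fin (n + 1)) ℂ) :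
    contractL n ℓ p = ∑ i, ℓ i • pderiv i p := by
  simp [contractL]

lemma contractL_X (ℓ : Fin (n + 1) → ℂ) (i : Fin (n + 1)) :
    contractL n ℓ (X i) = C (ℓ i) := by
  classical
  rw [contractL_apply]
  rw [Finset.sum_eq_single i]
  · rw [pderiv_X_self, smul_eq_C_mul, mul_one]
  · intro j _ hj
    rw [pderiv_X_of_ne (Ne.symm hj), smul_zero]
  · intro h; exact absurd (Finset.mem_univ i) h

lemma contractL_mul (ℓ : Fin (n + 1) → ℂ) (p q : MvPolynomial (Fin (n + 1)) ℂ) :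
    contractL n ℓ (p * q) = contractL n ℓ p * q + p * contractL n ℓ q := by
  rw [contractL_apply, contractL_apply, contractL_apply, Finset.sum_mul, Finset.mul_sum,
    ← Finset.sum_add_distrib]
  refine Finset.sum_congr rfl fun i _ => ?_
  rw [pderiv_mul, smul_add, smul_mul_assoc, mul_smul_comm]

lemma contractL_add_left (a b : Fin (n + 1) → ℂ) (p : MvPolynomial (Fin (n + 1)) ℂ) :
    contractL n (a + b) p = contractL n a p + contractL n b p := by
  simp [contractL_apply, add_smul, Finset.sum_add_distrib]

lemma contractL_sub_left (a b : Fin (n + 1) → ℂ) (p : MvPolynomial (Fin (n + 1)) ℂ) :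
    contractL n (a - b) p = contractL n a p - contractL n b p := by
  simp [contractL_apply, sub_smul, Finset.sum_sub_distrib]

lemma contractL_smul_left (c : ℂ) (a : Fin (n + 1) → ℂ) (p : MvPolynomial (Fin (n + 1)) ℂ) :
    contractL n (c • a) p = c • contractL n a p := by
  simp [contractL_apply, Finset.smul_sum, smul_smul]

/-- `A(φ)` as a submodule. -/
noncomputable def Asub (n : ℕ) (φ : MvPolynomial (Fin (n + 1)) ℂ) :
    Submodule ℂ (Fin (n + 1) → ℂ) where
  carrier := Aphi n φ
  add_mem' := by
    intro a b ha hb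
    simp only [Aphi, Set.mem_setOf_eq] at *
    rw [contractL_add_left, ha, hb, add_zero]
  zero_mem' := by
    simp [Aphi, contractL_apply]
  smul_mem' := by
    intro c a ha
    simp only [Aphi, Set.mem_setOf_eq] at *
    rw [contractL_smul_left, ha, smul_zero]

lemma contractL_adjoin_eq_zero {ℓ : Fin (n + 1) → ℂ}
    {s : Set (MvPolynomial (Fin (n + 1)) ℂ)}
    (h : ∀ w ∈ s, contractL n ℓ w = 0) {p : MvPolynomial (Fin (n + 1)) ℂ}
    (hp : p ∈ Algebra.adjoin ℂ s) : contractL n ℓ p = 0 := by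
  induction hp using Algebra.adjoin_induction with
  | mem x hx => exact h x hx
  | algebraMap r => simp [MvPolynomial.algebraMap_eq, contractL_apply]
  | add x y hx hy ihx ihy => rw [map_add, ihx, ihy, add_zero]
  | mul x y hx hy ihx ihy => rw [contractL_mul, ihx, ihy]; ring

lemma degree_single_one (i : Fin (n + 1)) :
    (Finsupp.single i 1 : Fin (n + 1) →₀ ℕ).degree = 1 := by
  classical
  simp [Finsupp.degree_apply, Finsupp.support_single_ne_zero]

lemma eq_single_of_degree_one {m : Fin (n + 1) →₀ ℕ} (hm : m.degree = 1) :
    ∃ i, m = Finsupp.single i 1 := by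
  classical
  have hne : m.support.Nonempty := by
    rw [Finset.nonempty_iff_ne_empty]
    intro h
    rw [Finsupp.degree_apply, h] at hm
    simp at hm
  obtain ⟨i, hi⟩ := hne
  have h2 : 1 ≤ m i := Nat.one_le_iff_ne_zero.mpr (Finsupp.mem_support_iff.mp hi)
  have hsub : m.support ⊆ {i} := by
    intro j hj
    by_contra hji
    simp only [Finset.mem_singleton] at hji
    have hj2 : 1 ≤ m j := Nat.one_le_iff_ne_zero.mpr (Finsupp.mem_support_iff.mp hj)
    have : m i + m j ≤ m.degree := by
      calc m i + m j = ∑ k ∈ ({i, j} : Finset _), m k := (Finset.sum_pair (Ne.symm hji)).symm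
        _ ≤ ∑ k ∈ m.support, m k := Finset.sum_le_sum_of_subset (by
            intro k hk
            simp only [Finset.mem_insert, Finset.mem_singleton] at hk
            rcases hk with rfl | rfl
            · exact hi
            · exact hj)
        _ = m.degree := rfl
    omega
  have hmi : m = Finsupp.single i (m i) := Finsupp.support_subset_singleton.mp hsub
  have : m i = 1 := by
    have := hm
    rw [hmi, ← hmi] at this
    have hle : m i ≤ m.degree := Finsupp.le_degree i m
    omega
  exact ⟨i, by rw [hmi, this]⟩

lemma homog1_eq {p : MvPolynomial (Fin (n + 1)) ℂ} (hp : p.IsHomogeneous 1) :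
    p = ∑ i, C (coeff (Finsupp.single i 1) p) * X i := by
  classical
  apply MvPolynomial.ext
  intro m
  rw [MvPolynomial.coeff_sum]
  simp only [coeff_C_mul, coeff_X']
  by_cases hm : m.degree = 1
  · obtain ⟨i, rfl⟩ := eq_single_of_degree_one hm
    rw [Finset.sum_eq_single i]
    · rw [if_pos rfl, mul_one]
    · intro j _ hj
      rw [if_neg, mul_zero]
      intro h
      exact hj (Finsupp.single_left_injective one_ne_zero h)
    · intro h; exact absurd (Finset.mem_univ i) h
  · rw [hp.coeff_eq_zero hm]
    symm
    apply Finset.sum_eq_zero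
    intro i _
    rw [if_neg, mul_zero]
    intro h
    exact hm (h ▸ degree_single_one i)

/-- Linearization of `v ↦ ∑ i, C (v i) * X i`. -/
noncomputable def toLinF (n : ℕ) : (Fin (n + 1) → ℂ) →ₗ[ℂ] MvPolynomial (Fin (n + 1)) ℂ :=
  ∑ i, LinearMap.smulRight (LinearMap.proj i) (X i)

lemma toLinF_apply (v : Fin (n + 1) → ℂ) :
    toLinF n v = ∑ i, C (v i) * X i := by
  simp [toLinF, smul_eq_C_mul]

/-- The standard pairing on `ℂ^{n+1}`. -/
noncomputable def dotB (n : ℕ) : LinearMap.BilinForm ℂ (Fin (n + 1) → ℂ) :=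
  LinearMap.mk₂ ℂ (fun x y => ∑ i, x i * y i)
    (fun a b c => by simp [add_mul, Finset.sum_add_distrib])
    (fun c a b => by simp [Finset.mul_sum, mul_assoc])
    (fun a b c => by simp [mul_add, Finset.sum_add_distrib])
    (fun c a b => by simp [Finset.mul_sum, mul_left_comm])

lemma dotB_apply (x y : Fin (n + 1) → ℂ) : dotB n x y = ∑ i, x i * y i := rfl

lemma dotB_nondeg : (dotB n).Nondegenerate := by
  constructor
  all_goals
    intro x hx
    funext i
    have := hx (Pi.single i 1)
    rw [dotB_apply] at this
    simpa [Pi.single_apply] using this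

lemma dotB_refl : (dotB n).IsRefl := by
  intro x y h
  rw [dotB_apply] at h ⊢
  rw [← h]
  exact Finset.sum_congr rfl fun i _ => mul_comm _ _

lemma contractL_homog1 {p : MvPolynomial (Fin (n + 1)) ℂ} (hp : p.IsHomogeneous 1)
    (ℓ : Fin (n + 1) → ℂ) :
    contractL n ℓ p = C (∑ i, coeff (Finsupp.single i 1) p * ℓ i) := by
  conv_lhs => rw [homog1_eq hp]
  rw [map_sum, map_sum]
  refine Finset.sum_congr rfl fun i _ => ?_
  rw [← smul_eq_C_mul, map_smul, contractL_X, smul_eq_C_mul, ← C_mul]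

lemma mem_Mphi {p φ : MvPolynomial (Fin (n + 1)) ℂ} :
    p ∈ Mphi n φ ↔ p.IsHomogeneous 1 ∧ ∀ ℓ ∈ Aphi n φ, contractL n ℓ p = 0 := by
  simp [Mphi, Submodule.mem_inf, Submodule.mem_iInf, LinearMap.mem_ker]

/-- Direction 1: if `φ` is a polynomial in elements of `W`, then `M(φ) ≤ W`. -/
lemma Mphi_le_of_adjoin {φ : MvPolynomial (Fin (n + 1)) ℂ}
    {W : Submodule ℂ (MvPolynomial (Fin (n + 1)) ℂ)}
    (hW : W ≤ homogeneousSubmodule (Fin (n + 1)) ℂ 1)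
    (hadj : φ ∈ Algebra.adjoin ℂ (W : Set (MvPolynomial (Fin (n + 1)) ℂ))) :
    Mphi n φ ≤ W := by
  classical
  intro p hp
  rw [mem_Mphi] at hp
  obtain ⟨hp1, hp2⟩ := hp
  set U : Submodule ℂ (Fin (n + 1) → ℂ) := W.comap (toLinF n) with hU
  have horth : ∀ ℓ ∈ (dotB n).orthogonal U, ℓ ∈ Aphi n φ := by
    intro ℓ hℓ
    show contractL n ℓ φ = 0
    refine contractL_adjoin_eq_zero (fun w hw => ?_) hadj
    have hw1 : w.IsHomogeneous 1 := hW hw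
    rw [contractL_homog1 hw1]
    have hvU : (fun i => coeff (Finsupp.single i 1) w) ∈ U := by
      show toLinF n _ ∈ W
      rw [toLinF_apply, ← homog1_eq hw1]
      exact hw
    have h0 := hℓ _ hvU
    rw [dotB_apply] at h0
    rw [h0, map_zero]
  have hv : (fun i => coeff (Finsupp.single i 1) p) ∈
      (dotB n).orthogonal ((dotB n).orthogonal U) := by
    intro ℓ hℓ
    have h0 := hp2 ℓ (horth ℓ hℓ)
    rw [contractL_homog1 hp1] at h0
    have h1 : (∑ i, coeff (Finsupp.single i 1) p * ℓ i) = 0 := by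
      apply MvPolynomial.C_injective (Fin (n + 1)) ℂ
      rw [h0, map_zero]
    rw [dotB_apply, ← h1]
    exact Finset.sum_congr rfl fun i _ => mul_comm _ _
  rw [(dotB n).orthogonal_orthogonal dotB_nondeg dotB_refl] at hv
  rw [hU, Submodule.mem_comap, toLinF_apply, ← homog1_eq hp1] at hv
  exact hv

/-! ### Euler's identity and friends -/

lemma degree_add' (a b : Fin (n + 1) →₀ ℕ) : (a + b).degree = a.degree + b.degree := by
  simp [Finsupp.degree_eq_weight_one, map_add]

lemma euler_monomial (m : Fin (n + 1) →₀ ℕ) (c : ℂ) :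
    ∑ i, X i * pderiv i (monomial m c) = (m.degree : ℂ) • monomial m c := by
  classical
  have h : ∀ i : Fin (n + 1),
      X i * pderiv i (monomial m c) = (m i : ℂ) • monomial m c := by
    intro i
    rw [pderiv_monomial]
    by_cases h0 : m i = 0
    · simp [h0]
    · have heq : Finsupp.single i 1 + (m - Finsupp.single i 1) = m := by
        ext j
        simp only [Finsupp.add_apply, Finsupp.tsub_apply, Finsupp.single_apply]
        split_ifs with h
        · subst h; omega
        · omega
      rw [show (X i : MvPolynomial (Fin (n + 1)) ℂ) = monomial (Finsupp.single i 1) 1 from rfl,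
        monomial_mul, one_mul, heq, smul_monomial, smul_eq_mul, mul_comm]
  rw [Finset.sum_congr rfl (fun i _ => h i), ← Finset.sum_smul]
  congr 1
  rw [Finsupp.degree_apply, ← Finset.sum_subset (Finset.subset_univ m.support)
    (fun x _ hx => by simpa using Finsupp.notMem_support_iff.mp hx)]
  push_cast
  rfl

lemma euler {d : ℕ} {φ : MvPolynomial (Fin (n + 1)) ℂ} (hφ : φ.IsHomogeneous d) :
    ∑ i, X i * pderiv i φ = (d : ℂ) • φ := by
  classical
  conv_lhs => rw [φ.as_sum]
  conv_rhs => rw [φ.as_sum]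
  rw [Finset.smul_sum]
  simp only [map_sum, Finset.mul_sum]
  rw [Finset.sum_comm]
  refine Finset.sum_congr rfl fun m hm => ?_
  rw [euler_monomial]
  congr 2
  have := hφ (MvPolynomial.mem_support_iff.mp hm)
  rw [Finsupp.degree_eq_weight_one]
  exact this

lemma pderiv_isHomogeneous {d : ℕ} {φ : MvPolynomial (Fin (n + 1)) ℂ}
    (hφ : φ.IsHomogeneous (d + 1)) (k : Fin (n + 1)) :
    (pderiv k φ).IsHomogeneous d := by
  classical
  rw [φ.as_sum, map_sum]
  apply IsHomogeneous.sum
  intro m hm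
  rw [pderiv_monomial]
  by_cases h0 : m k = 0
  · simp only [h0, Nat.cast_zero, mul_zero]
    rw [monomial_zero]
    exact isHomogeneous_zero _ _ _
  · apply isHomogeneous_monomial
    have hdm : m.degree = d + 1 := by
      have := hφ (MvPolynomial.mem_support_iff.mp hm)
      rw [Finsupp.degree_eq_weight_one]
      exact this
    have heq : (m - Finsupp.single k 1) + Finsupp.single k 1 = m := by
      ext j
      simp only [Finsupp.add_apply, Finsupp.tsub_apply, Finsupp.single_apply]
      split_ifs with h
      · subst h; omega
      · omega
    have := congrArg Finsupp.degree heq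
    rw [degree_add', degree_single_one, hdm] at this
    omega

lemma pderiv_comm' (i j : Fin (n + 1)) (p : MvPolynomial (Fin (n + 1)) ℂ) :
    pderiv i (pderiv j p) = pderiv j (pderiv i p) := by
  classical
  induction p using MvPolynomial.induction_on' with
  | monomial m c =>
    rcases eq_or_ne i j with rfl | hij
    · rfl
    · simp only [pderiv_monomial]
      have h1 : ((m - Finsupp.single j 1 : Fin (n + 1) →₀ ℕ)) i = m i := by
        rw [Finsupp.tsub_apply, Finsupp.single_apply, if_neg (Ne.symm hij), tsub_zero]
      have h2 : ((m - Finsupp.single i 1 : Fin (n + 1) →₀ ℕ)) j = m j := by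
        rw [Finsupp.tsub_apply, Finsupp.single_apply, if_neg hij, tsub_zero]
      rw [h1, h2, tsub_tsub, tsub_tsub, add_comm (Finsupp.single j 1)]
      ring_nf
  | add p q hp hq => simp [map_add, hp, hq]

lemma contractL_pderiv (ℓ : Fin (n + 1) → ℂ) (k : Fin (n + 1))
    (p : MvPolynomial (Fin (n + 1)) ℂ) :
    contractL n ℓ (pderiv k p) = pderiv k (contractL n ℓ p) := by
  rw [contractL_apply, contractL_apply, map_sum]
  refine Finset.sum_congr rfl fun i _ => ?_
  rw [Derivation.map_smul]
  rw [pderiv_comm']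

/-- Essential variables: `φ ∈ Sym^d M(φ)`. -/
lemma mem_adjoin_Mphi : ∀ (d : ℕ) (φ : MvPolynomial (Fin (n + 1)) ℂ), φ.IsHomogeneous d →
    φ ∈ Algebra.adjoin ℂ ((Mphi n φ : Set (MvPolynomial (Fin (n + 1)) ℂ))) := by
  intro d
  induction d with
  | zero =>
    intro φ hφ
    have hC : φ = C (coeff 0 φ) := by
      apply MvPolynomial.ext
      intro m
      rcases eq_or_ne m 0 with rfl | hm
      · simp
      · rw [coeff_C, if_neg (Ne.symm hm)]
        exact hφ.coeff_eq_zero (by rwa [Ne, Finsupp.degree_eq_zero_iff])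
    rw [hC, ← MvPolynomial.algebraMap_eq]
    exact Subalgebra.algebraMap_mem _ _
  | succ d ih =>
    intro φ hφ
    obtain ⟨A', hA'⟩ := Submodule.exists_isCompl (Asub n φ)
    set f : (Fin (n + 1) → ℂ) →ₗ[ℂ] (Fin (n + 1) → ℂ) :=
      A'.subtype ∘ₗ A'.projectionOnto (Asub n φ) hA'.symm with hf
    have hfA : ∀ a ∈ Asub n φ, f a = 0 := by
      intro a ha
      simp only [hf, LinearMap.comp_apply,
        Submodule.projectionOnto_apply_of_mem_right hA'.symm ha, map_zero]
    have hfmem : ∀ x, x - f x ∈ Asub n φ := by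
      intro x
      have hx := Submodule.projection_add_projection_eq_self hA'.symm x
      have hxx : x - f x =
          (((Asub n φ).projectionOnto A' hA'.symm.symm) x : Fin (n + 1) → ℂ) := by
        have hfx : f x = (A'.projectionOnto (Asub n φ) hA'.symm x : Fin (n + 1) → ℂ) := rfl
        rw [hfx, sub_eq_iff_eq_add]
        exact ((add_comm _ _).trans hx).symm
      rw [hxx]
      exact Submodule.coe_mem _
    set v : Fin (n + 1) → Fin (n + 1) → ℂ := fun k i => f (Pi.single i 1) k with hv
    set q : Fin (n + 1) → MvPolynomial (Fin (n + 1)) ℂ :=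
      fun k => ∑ i, C (v k i) * X i with hq
    have hq_homog : ∀ k, (q k).IsHomogeneous 1 := by
      intro k
      exact IsHomogeneous.sum _ _ _ fun i _ => (isHomogeneous_X ℂ i).C_mul (v k i)
    have hsv : ∀ (ℓ : Fin (n + 1) → ℂ) (k), (∑ i, v k i * ℓ i) = f ℓ k := by
      intro ℓ k
      have hℓ : ∑ i, ℓ i • (Pi.single i 1 : Fin (n + 1) → ℂ) = ℓ := by
        ext j
        rw [Finset.sum_apply, Finset.sum_eq_single_of_mem j (Finset.mem_univ j)]
        · simp
        · intro i _ hij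
          simp [Pi.single_eq_of_ne (Ne.symm hij)]
      have hfl : f ℓ = ∑ i, ℓ i • f (Pi.single i 1) := by
        conv_lhs => rw [← hℓ]
        rw [map_sum]
        exact Finset.sum_congr rfl fun i _ => map_smul f _ _
      rw [hfl, Finset.sum_apply]
      exact Finset.sum_congr rfl fun i _ => by simp [hv, mul_comm]
    have hqM : ∀ k, q k ∈ Mphi n φ := by
      intro k
      rw [mem_Mphi]
      refine ⟨hq_homog k, fun ℓ hℓ => ?_⟩
      rw [contractL_homog1 (hq_homog k)]
      have hco : ∀ i, coeff (Finsupp.single i 1) (q k) = v k i := by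
        intro i
        rw [hq, MvPolynomial.coeff_sum]
        simp only [coeff_C_mul, coeff_X']
        rw [Finset.sum_eq_single i]
        · rw [if_pos rfl, mul_one]
        · intro j _ hj
          rw [if_neg (fun h => hj (Finsupp.single_left_injective one_ne_zero h)), mul_zero]
        · intro h; exact absurd (Finset.mem_univ i) h
      have hsum : (∑ i, coeff (Finsupp.single i 1) (q k) * ℓ i) = f ℓ k := by
        rw [Finset.sum_congr rfl fun i _ => by rw [hco i]]
        exact hsv ℓ k
      rw [hsum, hfA ℓ hℓ]
      simp
    have hstep : ∀ i, pderiv i φ = ∑ k, v k i • pderiv k φ := by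
      intro i
      have h1 : contractL n (Pi.single i 1) φ = pderiv i φ := by
        rw [contractL_apply, Finset.sum_eq_single_of_mem i (Finset.mem_univ i)]
        · simp
        · intro j _ hj
          simp [Pi.single_eq_of_ne hj]
      have h2 : contractL n (Pi.single i 1) φ = contractL n (f (Pi.single i 1)) φ := by
        have hd0 : contractL n (Pi.single i 1 - f (Pi.single i 1)) φ = 0 :=
          hfmem (Pi.single i 1)
        rw [contractL_sub_left] at hd0
        exact (sub_eq_zero.mp hd0)
      rw [← h1, h2, contractL_apply]
    have keyid : ∑ i, X i * pderiv i φ = ∑ k, q k * pderiv k φ := by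
      calc ∑ i, X i * pderiv i φ = ∑ i, ∑ k, v k i • (X i * pderiv k φ) := by
            refine Finset.sum_congr rfl fun i _ => ?_
            rw [hstep i, Finset.mul_sum]
            exact Finset.sum_congr rfl fun k _ => mul_smul_comm _ _ _
        _ = ∑ k, ∑ i, v k i • (X i * pderiv k φ) := Finset.sum_comm
        _ = ∑ k, q k * pderiv k φ := by
            refine Finset.sum_congr rfl fun k _ => ?_
            rw [hq, Finset.sum_mul]
            refine Finset.sum_congr rfl fun i _ => ?_
            rw [← smul_eq_C_mul, smul_mul_assoc]
    have hsum_mem : (∑ k, q k * pderiv k φ) ∈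
        Algebra.adjoin ℂ ((Mphi n φ : Set (MvPolynomial (Fin (n + 1)) ℂ))) := by
      apply Subalgebra.sum_mem
      intro k _
      refine mul_mem (Algebra.subset_adjoin (hqM k)) ?_
      refine Algebra.adjoin_mono ?_ (ih (pderiv k φ) (pderiv_isHomogeneous hφ k))
      intro x hx
      rw [SetLike.mem_coe, mem_Mphi] at hx ⊢
      refine ⟨hx.1, fun ℓ hℓ => hx.2 ℓ ?_⟩
      have h0 : contractL n ℓ φ = 0 := hℓ
      show contractL n ℓ (pderiv k φ) = 0
      rw [contractL_pderiv, h0, map_zero]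
    have hne : ((d + 1 : ℕ) : ℂ) ≠ 0 := by exact_mod_cast Nat.succ_ne_zero d
    have hrepr : φ = ((d + 1 : ℕ) : ℂ)⁻¹ • ∑ k, q k * pderiv k φ := by
      rw [← keyid, euler hφ, smul_smul, inv_mul_cancel₀ hne, one_smul]
    have hfin := Subalgebra.smul_mem _ hsum_mem (((d + 1 : ℕ) : ℂ)⁻¹)
    rwa [← hrepr] at hfin

end Aux

/-- `M(φ)` satisfies the universal property (for subspaces `W ⊆ V`):
`φ ∈ Sym^d W ↔ M(φ) ⊆ W`, and it is the unique subspace of `V` with this property. -/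
theorem stmt3 (n d : ℕ) (hd : 1 ≤ d) (φ : MvPolynomial (Fin (n + 1)) ℂ)
    (hφ : φ.IsHomogeneous d) :
    (∀ W : Submodule ℂ (MvPolynomial (Fin (n + 1)) ℂ),
      W ≤ homogeneousSubmodule (Fin (n + 1)) ℂ 1 →
        (symPowMem n d W φ ↔ Mphi n φ ≤ W)) ∧
    (∀ M' : Submodule ℂ (MvPolynomial (Fin (n + 1)) ℂ),
      M' ≤ homogeneousSubmodule (Fin (n + 1)) ℂ 1 →
      (∀ W : Submodule ℂ (MvPolynomial (Fin (n + 1)) ℂ),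
        W ≤ homogeneousSubmodule (Fin (n + 1)) ℂ 1 →
          (symPowMem n d W φ ↔ M' ≤ W)) →
      M' = Mphi n φ) := by
  have huniv : ∀ W : Submodule ℂ (MvPolynomial (Fin (n + 1)) ℂ),
      W ≤ homogeneousSubmodule (Fin (n + 1)) ℂ 1 →
        (symPowMem n d W φ ↔ Mphi n φ ≤ W) := by
    intro W hW
    constructor
    · rintro ⟨hadj, -⟩
      exact Mphi_le_of_adjoin hW hadj
    · intro hMW
      refine ⟨?_, hφ⟩
      exact Algebra.adjoin_mono (SetLike.coe_subset_coe.mpr hMW) (mem_adjoin_Mphi d φ hφ)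
  refine ⟨huniv, ?_⟩
  intro M' hM' hMuniv
  have h1 : symPowMem n d M' φ := (hMuniv M' hM').mpr le_rfl
  have hMphi_le : Mphi n φ ≤ homogeneousSubmodule (Fin (n + 1)) ℂ 1 := inf_le_left
  have h2 : symPowMem n d (Mphi n φ) φ := ⟨mem_adjoin_Mphi d φ hφ, hφ⟩
  exact le_antisymm ((hMuniv (Mphi n φ) hMphi_le).mp h2) (Mphi_le_of_adjoin hM' h1.1)
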